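/- Let b̄, b, m̄, m, w̄, w ≥ 0 and b̄', b', m̄', m', w̄', w' ≥ 0 satisfy b̄ + m ≥ b + m̄, m̄ + w ≥ m + w̄, b̄ + w ≥ b + w̄, together with w = b' + m' + w̄' and w̄ = b̄' + m̄' + w'. Then at least one of the four quantities (b̄ + m + w), (b̄/2 + m + w̄), (b + m̄ + b̄' + m' + w'), (b + m̄ + b' + m̄' + w̄'/2) is at least (4/9)·(b̄ + b + m̄ + m + w̄ + w). -/
import Mathlib


/-- The averaging step of Case 2 (the W-pizza is hard) of the 4/9-theorem:
with the primed variables the major/minor part sizes of the tripartition of the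
W-pizza (so that `w = b' + m' + w̄'` and `w̄ = b̄' + m̄' + w'`), one of the four
guaranteed outcomes is at least 4/9 of the total size.  Here `bb, mm, ww, bb',
mm', ww'` denote the major sizes and `b, m, w, b', m', w'` the minor sizes. -/
theorem stmt14 (bb b mm m ww w bb' b' mm' m' ww' w' : ℝ)
    (hbb : 0 ≤ bb) (hb : 0 ≤ b) (hmm : 0 ≤ mm) (hm : 0 ≤ m) (hww : 0 ≤ ww) (hw : 0 ≤ w)
    (hbb' : 0 ≤ bb') (hb' : 0 ≤ b') (hmm' : 0 ≤ mm') (hm' : 0 ≤ m')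
    (hww' : 0 ≤ ww') (hw' : 0 ≤ w')
    (h1 : b + mm ≤ bb + m) (h2 : m + ww ≤ mm + w) (h3 : b + ww ≤ bb + w)
    (e1 : w = b' + m' + ww') (e2 : ww = bb' + mm' + w') :
    (4 / 9) * (bb + b + mm + m + ww + w) ≤ bb + m + w ∨
    (4 / 9) * (bb + b + mm + m + ww + w) ≤ bb / 2 + m + ww ∨
    (4 / 9) * (bb + b + mm + m + ww + w) ≤ b + mm + bb' + m' + w' ∨
    (4 / 9) * (bb + b + mm + m + ww + w) ≤ b + mm + b' + mm' + ww' / 2 := by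
  by_contra hc
  push_neg at hc
  obtain ⟨c1, c2, c3, c4⟩ := hc
  linarith
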